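/- Let T > 0, let L : ℝ → (E →ₗ[ℂ] E) be continuous, and let v : ℝ → E be continuously differentiable on [0,T] with ‖v 0‖ = 1 and satisfying v'(t) = L t (v t) − Re⟨v t, L t (v t)⟩ • v t for all t ∈ [0,T]. Then ‖v t‖ = 1 for all t ∈ [0,T]; i.e., the normalized master equation preserves the norm of the state vector. -/

import Mathlib

/-- The normalized master equation preserves the norm of the state vector. -/
theorem normalized_master_equation_preserves_norm
    {E : Type*} [NormedAddCommGroup E] [InnerProductSpace ℂ E] [FiniteDimensional ℂ E]
    (T : ℝ) (hT : 0 < T) (L : ℝ → (E →L[ℂ] E)) (hL : Continuous L)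
    (v : ℝ → E) (hv : ContDiffOn ℝ 1 v (Set.Icc 0 T))
    (h0 : ‖v 0‖ = 1)
    (hode : ∀ t ∈ Set.Icc (0 : ℝ) T,
      HasDerivAt v (L t (v t) - (inner ℂ (v t) (L t (v t)) : ℂ).re • v t) t) :
    ∀ t ∈ Set.Icc (0 : ℝ) T, ‖v t‖ = 1 := by
  set c : ℝ → ℝ := fun t => (inner ℂ (v t) (L t (v t)) : ℂ).re with hc
  set g : ℝ → ℝ := fun t => (inner ℂ (v t) (v t) : ℂ).re - 1 with hgdef
  have hvc : ContinuousOn v (Set.Icc 0 T) := hv.continuousOn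
  have hLc : ContinuousOn (fun t => L t (v t)) (Set.Icc 0 T) :=
    (hL.continuousOn).clm_apply hvc
  have hcc : ContinuousOn c (Set.Icc 0 T) :=
    Complex.continuous_re.comp_continuousOn (hvc.inner hLc)
  have hgc : ContinuousOn g (Set.Icc 0 T) :=
    (Complex.continuous_re.comp_continuousOn (hvc.inner hvc)).sub continuousOn_const
  -- derivative of g
  have hdg : ∀ t ∈ Set.Icc (0 : ℝ) T, HasDerivAt g (-(2 * c t) * g t) t := by
    intro t ht
    have hdv := hode t ht
    set w : E := L t (v t) - c t • v t with hw
    have h1 : HasDerivAt (fun s => (inner ℂ (v s) (v s) : ℂ))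
        (inner ℂ (v t) w + inner ℂ w (v t)) t := hdv.inner ℂ hdv
    have h2 : HasDerivAt (fun s => ((inner ℂ (v s) (v s) : ℂ)).re)
        ((inner ℂ (v t) w + inner ℂ w (v t) : ℂ)).re t :=
      (Complex.reCLM.hasFDerivAt.comp_hasDerivAt t h1)
    have h3 : HasDerivAt g ((inner ℂ (v t) w + inner ℂ w (v t) : ℂ)).re t := h2.sub_const 1
    have hsm : (c t) • v t = ((c t : ℂ)) • v t := by
      rw [Complex.coe_smul]
    have hre : (inner ℂ (v t) w : ℂ).re = - c t * g t := by
      rw [hw, hsm, inner_sub_right, inner_smul_right]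
      simp only [Complex.sub_re, Complex.mul_re, Complex.ofReal_re, Complex.ofReal_im]
      have : (inner ℂ (v t) (v t) : ℂ).im = 0 := by
        rw [show (inner ℂ (v t) (v t) : ℂ).im = RCLike.im (inner ℂ (v t) (v t) : ℂ) from rfl, inner_self_im]
      rw [this]
      simp only [hgdef, hc]
      ring
    have hre2 : (inner ℂ w (v t) : ℂ).re = (inner ℂ (v t) w : ℂ).re := by
      rw [← inner_conj_symm (v t) w, Complex.conj_re]
    have hval : ((inner ℂ (v t) w + inner ℂ w (v t) : ℂ)).re = -(2 * c t) * g t := by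
      rw [Complex.add_re, hre2, hre]; ring
    rwa [hval] at h3
  -- bound on 2*c
  obtain ⟨K, hK⟩ := (isCompact_Icc (a := (0:ℝ)) (b := T)).exists_bound_of_continuousOn
    (by fun_prop : ContinuousOn (fun t => 2 * c t) (Set.Icc 0 T))
  -- Gronwall
  have hbound : ∀ x ∈ Set.Ico (0 : ℝ) T, ‖-(2 * c x) * g x‖ ≤ K * ‖g x‖ + 0 := by
    intro x hx
    have := hK x (Set.Ico_subset_Icc_self hx)
    rw [norm_mul, norm_neg]
    have hg0 : (0:ℝ) ≤ ‖g x‖ := norm_nonneg _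
    nlinarith [norm_nonneg (2 * c x)]
  have ha : ‖g 0‖ ≤ 0 := by
    have : (inner ℂ (v 0) (v 0) : ℂ).re = ‖v 0‖ ^ 2 := by
      simpa using inner_self_eq_norm_sq (𝕜 := ℂ) (v 0)
    simp [hgdef, this, h0]
  have hmain := norm_le_gronwallBound_of_norm_deriv_right_le (f := g)
    (f' := fun x => -(2 * c x) * g x) hgc
    (fun x hx => (hdg x (Set.Ico_subset_Icc_self hx)).hasDerivWithinAt) ha hbound
  intro t ht
  have h1 : ‖g t‖ ≤ 0 := by
    have := hmain t ht
    rwa [gronwallBound_ε0_δ0] at this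
  have hg0 : g t = 0 := by
    have := norm_nonneg (g t)
    have : ‖g t‖ = 0 := le_antisymm h1 this
    simpa using this
  have h2 : (inner ℂ (v t) (v t) : ℂ).re = ‖v t‖ ^ 2 := by
    simpa using inner_self_eq_norm_sq (𝕜 := ℂ) (v t)
  have h3 : ‖v t‖ ^ 2 = 1 := by
    rw [← h2]
    simpa [hgdef] using sub_eq_zero.mp hg0
  nlinarith [norm_nonneg (v t)]
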